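/- Let 2 ≤ r ≤ d and 1 ≤ j ≤ r − 1. If x ∈ ℕ^d is r-tight, then g_j(x) is r-tight. -/

import Mathlib

namespace Spiral

/-- The size `n(x) = n₁ + ⋯ + n_d` of a configuration `x ∈ ℕ^d`. -/
def size {d : ℕ} (x : Fin d → ℕ) : ℕ := ∑ i, x i

/-- The weight `W(x) = Σ_{i<j} (max(0, x_j − x_i) + max(0, x_i − x_j − 1))`
(truncated ℕ-subtraction realizes the `max(0,·)`). -/
def weight {d : ℕ} (x : Fin d → ℕ) : ℕ :=
  ∑ i : Fin d, ∑ j : Fin d, if i < j then (x j - x i) + (x i - x j - 1) else 0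

/-- The configuration `x` as a set of points of `[d] × ℕ`: the point `(i, n)` (seat `i`
0-indexed, level `n`) is encoded as the natural number `n*d + i`. The usual order on the
encodings is exactly the height order `≺` (height `h(i,n) = n + i/d`), and the spiral
shift `δ + s/d` is encoded as `+ s`. -/
def pts (d : ℕ) (x : Fin d → ℕ) : Finset ℕ :=
  Finset.image (fun i : Fin d => x i * d + i.val) Finset.univ

/-- The points of `x` listed in increasing height order: `δ¹(x), …, δ^d(x)`. -/
def sortedPts (d : ℕ) (x : Fin d → ℕ) : List ℕ :=
  (pts d x).sort (· ≤ ·)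

/-- The lowest point strictly above `p` (along the spiral) whose seat lies in `S`. -/
noncomputable def nextPt (d : ℕ) (S : Finset ℕ) (p : ℕ) : ℕ :=
  sInf {q : ℕ | p < q ∧ q % d ∈ S}

/-- The spiral shifting operator `g_j` (for `1 ≤ j ≤ d`): it fixes the lowest `j - 1`
points `δ¹(x), …, δ^{j-1}(x)` and moves each remaining point `δ^k(x)` (`k ≥ j`) to
`δ^k(x) + s_k/d`, where `s_k` is the minimal positive integer such that the seat of
`δ^k(x) + s_k/d` lies in `{i(δ^j(x)), …, i(δ^d(x))}`. The resulting configuration is read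
off from the new point set (which has exactly one point per seat). -/
noncomputable def gOp (d : ℕ) (j : ℕ) (x : Fin d → ℕ) : Fin d → ℕ := fun i =>
  let L := sortedPts d x
  let low := L.take (j - 1)
  let high := L.drop (j - 1)
  let S : Finset ℕ := high.toFinset.image (· % d)
  let Q : Finset ℕ := low.toFinset ∪ (high.map (nextPt d S)).toFinset
  ∑ q ∈ Q.filter (fun q => q % d = i.val), q / d

/-- `g^a := g₁^{a₁} ∘ ⋯ ∘ g_d^{a_d}` (here `a i` is the exponent of `g_{i+1}`). -/
noncomputable def gIter (d : ℕ) (a : Fin d → ℕ) (x : Fin d → ℕ) : Fin d → ℕ :=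
  (List.finRange d).foldr (fun j y => (gOp d (j.val + 1))^[a j] y) x

end Spiral

namespace Spiral

/-- For `2 ≤ r ≤ d`: a configuration `x ∈ ℕ^d` is `r`-tight if `δ^r(x)` is the `≺`-lowest
point of `{i(δ^r(x)), …, i(δ^d(x))} × ℕ` that is `≺`-higher than `δ^{r−1}(x)`. In the
encoding, `δ^r(x)` is the `(r-1)`-st entry (0-indexed) of the height-sorted list of points,
and the condition says it equals the least point above `δ^{r-1}(x)` whose seat lies among
the seats of `δ^r(x), …, δ^d(x)`. -/
def rTight (d r : ℕ) (x : Fin d → ℕ) : Prop :=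
  (sortedPts d x).getD (r - 1) 0 =
    nextPt d (((sortedPts d x).drop (r - 1)).toFinset.image (· % d))
      ((sortedPts d x).getD (r - 2) 0)

end Spiral

namespace Spiral
variable {d : ℕ} {S : Finset ℕ}

def NEx (d : ℕ) (S : Finset ℕ) : Prop := ∃ s ∈ S, s < d

lemma NEx.nonempty (h : NEx d S) (p : ℕ) : {q : ℕ | p < q ∧ q % d ∈ S}.Nonempty := by
  obtain ⟨s, hs, hsd⟩ := h
  refine ⟨(p / d + 1) * d + s, ?_, ?_⟩
  · have h1 := Nat.div_add_mod p d
    have h2 : p % d < d := Nat.mod_lt _ (by omega)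
    nlinarith [Nat.zero_le s]
  · rw [Nat.add_comm, Nat.add_mul_mod_self_right, Nat.mod_eq_of_lt hsd]
    exact hs

lemma NEx.lt_nextPt (h : NEx d S) (p : ℕ) : p < nextPt d S p :=
  (Nat.sInf_mem (h.nonempty p)).1

lemma NEx.nextPt_mod (h : NEx d S) (p : ℕ) : nextPt d S p % d ∈ S :=
  (Nat.sInf_mem (h.nonempty p)).2

lemma nextPt_le {p q : ℕ} (h1 : p < q) (h2 : q % d ∈ S) : nextPt d S p ≤ q :=
  Nat.sInf_le ⟨h1, h2⟩

lemma NEx.nextPt_add_d (h : NEx d S) (hd : 0 < d) (p : ℕ) :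
    nextPt d S (p + d) = nextPt d S p + d := by
  have h1 : nextPt d S (p + d) ≤ nextPt d S p + d := by
    refine nextPt_le (by have := h.lt_nextPt p; omega) ?_
    rw [Nat.add_mod_right]; exact h.nextPt_mod p
  have h2 : nextPt d S p + d ≤ nextPt d S (p + d) := by
    have hgt := h.lt_nextPt (p + d)
    have hmod := h.nextPt_mod (p + d)
    have h3 : nextPt d S p ≤ nextPt d S (p + d) - d := by
      refine nextPt_le (by omega) ?_
      have : nextPt d S (p + d) - d + d = nextPt d S (p + d) := by omega
      rw [← Nat.add_mod_right, this]; exact hmod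
    omega
  omega

lemma NEx.nextPt_add_mul (h : NEx d S) (hd : 0 < d) (p e : ℕ) :
    nextPt d S (p + e * d) = nextPt d S p + e * d := by
  induction e with
  | zero => simp
  | succ n ih =>
    have := h.nextPt_add_d hd (p + n * d)
    rw [Nat.succ_mul, ← Nat.add_assoc, this, ih]; ring

/-- strict monotonicity on T -/
lemma NEx.nextPt_lt_nextPt (h : NEx d S) {p q : ℕ} (hpq : p < q) (hq : q % d ∈ S) :
    nextPt d S p < nextPt d S q :=
  lt_of_le_of_lt (nextPt_le hpq hq) (h.lt_nextPt q)

lemma NEx.nextPt_injOn (h : NEx d S) {p q : ℕ} (hp : p % d ∈ S) (hq : q % d ∈ S)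
    (he : nextPt d S p = nextPt d S q) : p = q := by
  rcases Nat.lt_trichotomy p q with h1 | h1 | h1
  · exact absurd he (Nat.ne_of_lt (h.nextPt_lt_nextPt h1 hq))
  · exact h1
  · exact absurd he.symm (Nat.ne_of_lt (h.nextPt_lt_nextPt h1 hp))

lemma NEx.nextPt_mod_inj (h : NEx d S) (hd : 0 < d) {p q : ℕ} (hp : p % d ∈ S) (hq : q % d ∈ S)
    (he : nextPt d S p % d = nextPt d S q % d) : p % d = q % d := by
  -- wlog nextPt p ≤ nextPt q
  wlog hle : nextPt d S p ≤ nextPt d S q generalizing p q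
  · exact (this hq hp he.symm (by omega)).symm
  obtain ⟨e, hee⟩ : ∃ e, nextPt d S q = nextPt d S p + e * d := by
    have hdvd : d ∣ nextPt d S q - nextPt d S p := (Nat.modEq_iff_dvd' hle).mp he
    obtain ⟨e, he'⟩ := hdvd
    exact ⟨e, by rw [Nat.mul_comm] at he'; omega⟩
  have : nextPt d S (p + e * d) = nextPt d S q := by rw [h.nextPt_add_mul hd, ← hee]
  have hpe : (p + e * d) % d ∈ S := by rwa [Nat.add_mul_mod_self_right]
  have heq := h.nextPt_injOn hpe hq this
  rw [← heq, Nat.add_mul_mod_self_right]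

/-- existence of a predecessor along T -/
lemma NEx.exists_pred (h : NEx d S) {q t : ℕ} (hq : q % d ∈ S) (ht : t < q) (htS : t % d ∈ S) :
    ∃ p, p < q ∧ p % d ∈ S ∧ nextPt d S p = q := by
  classical
  set F := (Finset.range q).filter (fun a => a % d ∈ S) with hF
  have hFne : F.Nonempty := ⟨t, by simp [hF, Finset.mem_filter, Finset.mem_range, ht, htS]⟩
  set p := F.max' hFne with hp
  have hpF : p ∈ F := F.max'_mem hFne
  have hpq : p < q := by simpa [hF, Finset.mem_filter] using (Finset.mem_filter.mp hpF).1 |> Finset.mem_range.mp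
  have hpS : p % d ∈ S := (Finset.mem_filter.mp hpF).2
  refine ⟨p, hpq, hpS, ?_⟩
  have hle : nextPt d S p ≤ q := nextPt_le hpq hq
  rcases Nat.lt_or_ge (nextPt d S p) q with hlt | hge
  · exfalso
    have hmem : nextPt d S p ∈ F := by
      simp only [hF, Finset.mem_filter, Finset.mem_range]
      exact ⟨hlt, h.nextPt_mod p⟩
    have := F.le_max' _ hmem
    have := h.lt_nextPt p
    omega
  · omega

end Spiral

namespace Spiral
variable {d : ℕ}

lemma mem_pts_iff (x : Fin d → ℕ) {q : ℕ} : q ∈ pts d x ↔ ∃ i : Fin d, q = x i * d + i.val := by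
  simp [pts, eq_comm]

lemma mod_lt_of_mem_pts (hd : 0 < d) (x : Fin d → ℕ) {q : ℕ} (h : q ∈ pts d x) : q % d < d :=
  Nat.mod_lt _ hd

lemma pts_mod_inj (hd : 0 < d) (x : Fin d → ℕ) {p q : ℕ} (hp : p ∈ pts d x) (hq : q ∈ pts d x)
    (h : p % d = q % d) : p = q := by
  obtain ⟨i, rfl⟩ := (mem_pts_iff x).mp hp
  obtain ⟨i', rfl⟩ := (mem_pts_iff x).mp hq
  have h1 : (x i * d + i.val) % d = i.val := by
    rw [Nat.add_comm, Nat.add_mul_mod_self_right, Nat.mod_eq_of_lt i.isLt]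
  have h2 : (x i' * d + i'.val) % d = i'.val := by
    rw [Nat.add_comm, Nat.add_mul_mod_self_right, Nat.mod_eq_of_lt i'.isLt]
  rw [h1, h2] at h
  have : i = i' := Fin.ext h
  rw [this]

lemma pts_card (hd : 0 < d) (x : Fin d → ℕ) : (pts d x).card = d := by
  rw [pts, Finset.card_image_of_injective _ ?_, Finset.card_univ, Fintype.card_fin]
  intro i i' hii
  have h : x i * d + i.val = x i' * d + i'.val := hii
  have h1 : (x i * d + i.val) % d = i.val := by
    rw [Nat.add_comm, Nat.add_mul_mod_self_right, Nat.mod_eq_of_lt i.isLt]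
  have h2 : (x i' * d + i'.val) % d = i'.val := by
    rw [Nat.add_comm, Nat.add_mul_mod_self_right, Nat.mod_eq_of_lt i'.isLt]
  exact Fin.ext (by rw [← h1, ← h2, h])

lemma sortedPts_sorted (x : Fin d → ℕ) : (sortedPts d x).Pairwise (· < ·) :=
  ((Finset.pairwise_sort _ _).and (Finset.sort_nodup _ _)).imp (fun h => lt_of_le_of_ne h.1 h.2)

lemma sortedPts_length (hd : 0 < d) (x : Fin d → ℕ) : (sortedPts d x).length = d := by
  rw [sortedPts, Finset.length_sort, pts_card hd]

lemma mem_sortedPts (x : Fin d → ℕ) {q : ℕ} : q ∈ sortedPts d x ↔ q ∈ pts d x :=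
  Finset.mem_sort _

/-- The key structural lemma: the sorted point list of `g_j x`. -/
lemma sortedPts_gOp (hd : 0 < d) {j : ℕ} (hjd : j ≤ d) (x : Fin d → ℕ) :
    sortedPts d (gOp d j x) =
      (sortedPts d x).take (j - 1) ++
      ((sortedPts d x).drop (j - 1)).map
        (nextPt d (((sortedPts d x).drop (j - 1)).toFinset.image (· % d))) := by
  classical
  set L := sortedPts d x with hL
  set low := L.take (j - 1) with hlow
  set high := L.drop (j - 1) with hhigh
  set S : Finset ℕ := high.toFinset.image (· % d) with hS
  set f : ℕ → ℕ := nextPt d S with hf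
  set M := high.map f with hM
  set R := low ++ M with hR
  have hLsort : L.Pairwise (· < ·) := sortedPts_sorted x
  have hLlen : L.length = d := sortedPts_length hd x
  have hLmem : ∀ {q : ℕ}, q ∈ L → q ∈ pts d x := fun h => (mem_sortedPts x).mp h
  have hLnodup : L.Nodup := hLsort.nodup
  have htd : L = low ++ high := (List.take_append_drop _ _).symm
  have hhighlen : high.length = d - (j - 1) := by
    rw [hhigh, List.length_drop, hLlen]
  have hhighne : high ≠ [] := by
    intro h
    rw [h] at hhighlen
    simp at hhighlen
    omega
  -- elements of high have residue in S
  have hmodS : ∀ p ∈ high, p % d ∈ S := by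
    intro p hp
    rw [hS]
    exact Finset.mem_image_of_mem _ (List.mem_toFinset.mpr hp)
  -- NEx
  have hNE : NEx d S := by
    obtain ⟨p, hp⟩ := List.exists_mem_of_ne_nil high hhighne
    exact ⟨p % d, hmodS p hp, Nat.mod_lt _ hd⟩
  -- membership in L of low/high elements
  have hlowL : ∀ p ∈ low, p ∈ L := fun p hp => List.mem_of_mem_take hp
  have hhighL : ∀ p ∈ high, p ∈ L := fun p hp => List.mem_of_mem_drop hp
  -- low < high pointwise
  have hcross : ∀ a ∈ low, ∀ b ∈ high, a < b := by
    have := htd ▸ hLsort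
    intro a ha b hb
    exact (List.pairwise_append.mp this).2.2 a ha b hb
  -- high sorted
  have hhighsort : high.Pairwise (· < ·) := hLsort.drop
  have hlowsort : low.Pairwise (· < ·) := hLsort.take
  -- M sorted
  have hMsort : M.Pairwise (· < ·) := by
    rw [hM, List.pairwise_map]
    refine hhighsort.imp_of_mem ?_
    intro a b ha hb hab
    exact hNE.nextPt_lt_nextPt hab (hmodS b hb)
  -- residues of M lie in S
  have hMmodS : ∀ q ∈ M, q % d ∈ S := by
    intro q hq
    rw [hM] at hq
    obtain ⟨p, hp, rfl⟩ := List.mem_map.mp hq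
    exact hNE.nextPt_mod p
  -- low and high are disjoint
  have hdisj : ∀ a ∈ low, a ∉ high := by
    have hnd : (low ++ high).Nodup := htd ▸ hLnodup
    exact fun a ha hahigh => List.disjoint_of_nodup_append hnd ha hahigh
  -- residues of low are not in S
  have hlowS : ∀ a ∈ low, a % d ∉ S := by
    intro a ha haS
    rw [hS] at haS
    obtain ⟨c, hc, hc2⟩ := Finset.mem_image.mp haS
    have hcL := List.mem_toFinset.mp hc
    have : a = c := pts_mod_inj hd x (hLmem (hlowL a ha)) (hLmem (hhighL c hcL)) hc2.symm
    exact hdisj a ha (this ▸ hcL)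
  -- R is sorted
  have hRsort : R.Pairwise (· < ·) := by
    rw [hR, List.pairwise_append]
    refine ⟨hlowsort, hMsort, ?_⟩
    intro a ha b hb
    rw [hM] at hb
    obtain ⟨c, hc, rfl⟩ := List.mem_map.mp hb
    exact lt_trans (hcross a ha c hc) (hNE.lt_nextPt c)
  have hRnodup : R.Nodup := hRsort.nodup
  have hRlen : R.length = d := by
    rw [hR, List.length_append, hlow, List.length_take, hM, List.length_map, hhighlen, hLlen]
    omega
  -- residues determine elements of R
  have hRmodinj : ∀ p ∈ R, ∀ q ∈ R, p % d = q % d → p = q := by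
    intro p hp q hq hmod
    rw [hR, List.mem_append] at hp hq
    rcases hp with hp | hp <;> rcases hq with hq | hq
    · exact pts_mod_inj hd x (hLmem (hlowL p hp)) (hLmem (hlowL q hq)) hmod
    · exact absurd (hmod ▸ hMmodS q hq : p % d ∈ S) (hlowS p hp)
    · exact absurd (hmod.symm ▸ hMmodS p hp : q % d ∈ S) (hlowS q hq)
    · rw [hM] at hp hq
      obtain ⟨a, ha, rfl⟩ := List.mem_map.mp hp
      obtain ⟨b, hb, rfl⟩ := List.mem_map.mp hq
      have : a % d = b % d := hNE.nextPt_mod_inj hd (hmodS a ha) (hmodS b hb) hmod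
      have : a = b := pts_mod_inj hd x (hLmem (hhighL a ha)) (hLmem (hhighL b hb)) this
      rw [this]
  -- the image of residues is all of range d
  have hinjOn : Set.InjOn (· % d) ↑R.toFinset := by
    intro p hp q hq hmod
    exact hRmodinj p (List.mem_toFinset.mp hp) q (List.mem_toFinset.mp hq) hmod
  have hcardR : R.toFinset.card = d := by
    rw [List.toFinset_card_of_nodup hRnodup, hRlen]
  have himage : R.toFinset.image (· % d) = Finset.range d := by
    apply Finset.eq_of_subset_of_card_le
    · intro a ha
      obtain ⟨p, hp, rfl⟩ := Finset.mem_image.mp ha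
      exact Finset.mem_range.mpr (Nat.mod_lt _ hd)
    · rw [Finset.card_range, Finset.card_image_of_injOn hinjOn, hcardR]
  -- unique representative per residue
  have hrep : ∀ i : Fin d, ∃ q, q ∈ R.toFinset ∧ q % d = i.val ∧
      R.toFinset.filter (fun q => q % d = i.val) = {q} := by
    intro i
    have : (i : ℕ) ∈ Finset.range d := Finset.mem_range.mpr i.isLt
    rw [← himage] at this
    obtain ⟨q, hq, hq2⟩ := Finset.mem_image.mp this
    refine ⟨q, hq, hq2, ?_⟩
    ext a
    simp only [Finset.mem_filter, Finset.mem_singleton]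
    constructor
    · rintro ⟨haR, ha2⟩
      exact hRmodinj a (List.mem_toFinset.mp haR) q (List.mem_toFinset.mp hq) (by rw [ha2, hq2])
    · rintro rfl
      exact ⟨hq, hq2⟩
  -- computing gOp
  have hg : ∀ i : Fin d, gOp d j x i =
      ∑ q ∈ R.toFinset.filter (fun q => q % d = i.val), q / d := by
    intro i
    rw [gOp]
    rw [hR, List.toFinset_append]
  have hgval : ∀ i : Fin d, ∃ q ∈ R.toFinset, q % d = i.val ∧ gOp d j x i * d + i.val = q := by
    intro i
    obtain ⟨q, hq, hq2, hq3⟩ := hrep i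
    refine ⟨q, hq, hq2, ?_⟩
    rw [hg i, hq3, Finset.sum_singleton, ← hq2]
    rw [Nat.mul_comm]
    exact Nat.div_add_mod q d
  -- pts of gOp
  have hpts : pts d (gOp d j x) = R.toFinset := by
    ext q
    rw [mem_pts_iff]
    constructor
    · rintro ⟨i, rfl⟩
      obtain ⟨q', hq', hq'2, hq'3⟩ := hgval i
      rw [hq'3]
      exact hq'
    · intro hq
      have hqd : q % d < d := Nat.mod_lt _ hd
      refine ⟨⟨q % d, hqd⟩, ?_⟩
      obtain ⟨q', hq', hq'2, hq'3⟩ := hgval ⟨q % d, hqd⟩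
      have : q = q' := hRmodinj q (List.mem_toFinset.mp hq) q' (List.mem_toFinset.mp hq')
        (by rw [hq'2])
      exact (hq'3.trans this.symm).symm
  -- conclude
  have hperm : List.Perm (sortedPts d (gOp d j x)) R := by
    rw [sortedPts, hpts]
    apply List.perm_of_nodup_nodup_toFinset_eq (Finset.sort_nodup _ _) hRnodup
    rw [Finset.sort_toFinset]
  exact List.Perm.eq_of_pairwise' (Finset.pairwise_sort _ _) (hRsort.imp le_of_lt) hperm

end Spiral

namespace Spiral

lemma getD_mem {L : List ℕ} {k : ℕ} (h : k < L.length) : L.getD k 0 ∈ L := by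
  rw [List.getD_eq_getElem _ _ h]
  exact List.getElem_mem h

lemma getD_lt_getD {L : List ℕ} (hs : L.Pairwise (· < ·)) {k l : ℕ} (hkl : k < l)
    (hl : l < L.length) : L.getD k 0 < L.getD l 0 := by
  rw [List.getD_eq_getElem _ _ (lt_trans hkl hl), List.getD_eq_getElem _ _ hl]
  exact List.pairwise_iff_getElem.mp hs k l (lt_trans hkl hl) hl hkl

lemma mem_drop_of_getD {L : List ℕ} {m k : ℕ} (hmk : m ≤ k) (hk : k < L.length) :
    L.getD k 0 ∈ L.drop m := by
  have h2 : k - m < (L.drop m).length := by rw [List.length_drop]; omega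
  have : (L.drop m).getD (k - m) 0 = L.getD k 0 := by
    rw [List.getD_eq_getElem _ _ h2, List.getD_eq_getElem _ _ hk]
    rw [List.getElem_drop]
    congr 1
    omega
  rw [← this]
  exact getD_mem h2

end Spiral


open Spiral in
/-- Let `2 ≤ r ≤ d` and `1 ≤ j ≤ r − 1`. If `x ∈ ℕ^d` is `r`-tight, then
`g_j(x)` is `r`-tight. -/
theorem statement9 (d r j : ℕ) (hr2 : 2 ≤ r) (hrd : r ≤ d) (hj1 : 1 ≤ j) (hjr : j ≤ r - 1)
    (x : Fin d → ℕ) (hx : rTight d r x) : rTight d r (gOp d j x) := by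
  classical
  obtain ⟨r₀, rfl⟩ : ∃ r₀, r = r₀ + 2 := ⟨r - 2, by omega⟩
  obtain ⟨j₀, rfl⟩ : ∃ j₀, j = j₀ + 1 := ⟨j - 1, by omega⟩
  have hd : 0 < d := by omega
  have hj₀r₀ : j₀ ≤ r₀ := by omega
  have hr₀d : r₀ + 2 ≤ d := hrd
  set L := sortedPts d x with hL
  set S : Finset ℕ := (L.drop j₀).toFinset.image (· % d) with hS
  set f : ℕ → ℕ := nextPt d S with hf
  have hLsort : L.Pairwise (· < ·) := sortedPts_sorted x
  have hLlen : L.length = d := sortedPts_length hd x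
  -- structural lemma
  have hstruct : sortedPts d (gOp d (j₀ + 1) x) = L.take j₀ ++ (L.drop j₀).map f := by
    have := sortedPts_gOp hd (j := j₀ + 1) (by omega) x
    simpa using this
  -- basic facts
  have hmodS : ∀ p ∈ L.drop j₀, p % d ∈ S := by
    intro p hp
    exact Finset.mem_image_of_mem _ (List.mem_toFinset.mpr hp)
  have hNE : NEx d S := by
    have hmem : L.getD r₀ 0 ∈ L.drop j₀ := mem_drop_of_getD hj₀r₀ (by omega)
    exact ⟨_, hmodS _ hmem, Nat.mod_lt _ hd⟩
  set A := L.getD r₀ 0 with hA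
  set B := L.getD (r₀ + 1) 0 with hB
  have hAhigh : A ∈ L.drop j₀ := mem_drop_of_getD hj₀r₀ (by omega)
  have hBhigh : B ∈ L.drop j₀ := mem_drop_of_getD (by omega) (by omega)
  have hBdrop : B ∈ L.drop (r₀ + 1) := mem_drop_of_getD (le_refl _) (by omega)
  have hAB : A < B := getD_lt_getD hLsort (Nat.lt_succ_self r₀) (by omega)
  have hlowlen : (L.take j₀).length = j₀ := by
    rw [List.length_take]; omega
  -- rewrite the tightness of x
  rw [rTight] at hx
  rw [show r₀ + 2 - 1 = r₀ + 1 from rfl, show r₀ + 2 - 2 = r₀ from rfl] at hx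
  rw [← hL, ← hA, ← hB] at hx
  set Sr : Finset ℕ := (L.drop (r₀ + 1)).toFinset.image (· % d) with hSr
  -- hx : B = nextPt d Sr A
  -- the goal
  rw [rTight, show r₀ + 2 - 1 = r₀ + 1 from rfl, show r₀ + 2 - 2 = r₀ from rfl, hstruct]
  -- compute the three pieces
  have hMlen : ((L.drop j₀).map f).length = d - j₀ := by
    rw [List.length_map, List.length_drop, hLlen]
  have hgetD : ∀ k, j₀ ≤ k → k < d →
      (L.take j₀ ++ (L.drop j₀).map f).getD k 0 = f (L.getD k 0) := by
    intro k hk1 hk2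
    rw [List.getD_append_right _ _ _ _ (by omega : (L.take j₀).length ≤ k)]
    rw [hlowlen]
    have h3 : k - j₀ < ((L.drop j₀).map f).length := by rw [hMlen]; omega
    rw [List.getD_eq_getElem _ _ h3, List.getElem_map, List.getD_eq_getElem _ _ (by omega)]
    congr 1
    rw [List.getElem_drop]
    congr 1
    omega
  have hdropR : (L.take j₀ ++ (L.drop j₀).map f).drop (r₀ + 1) = (L.drop (r₀ + 1)).map f := by
    rw [show r₀ + 1 = (L.take j₀).length + (r₀ + 1 - j₀) by rw [hlowlen]; omega]
    rw [List.drop_length_add_append, ← List.map_drop, List.drop_drop]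
    congr 2
    omega
  rw [hgetD (r₀ + 1) (by omega) (by omega), hgetD r₀ hj₀r₀ (by omega), hdropR]
  set S'' : Finset ℕ := ((L.drop (r₀ + 1)).map f).toFinset.image (· % d) with hS''
  -- goal : f B = nextPt d S'' (f A)
  set QA := f A with hQA
  set QB := f B with hQB
  have hQAS : QA % d ∈ S := hNE.nextPt_mod A
  have hQAB : QA < QB := hNE.nextPt_lt_nextPt hAB (hmodS B hBhigh)
  have hQBS'' : QB % d ∈ S'' := by
    rw [hS'']
    exact Finset.mem_image_of_mem _ (List.mem_toFinset.mpr (List.mem_map_of_mem (f := f) hBdrop))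
  -- minimality
  have hmin : ∀ t, QA < t → t % d ∈ S'' → QB ≤ t := by
    intro t ht htS
    by_contra hlt
    push_neg at hlt
    -- t % d ∈ S via some c ∈ L.drop (r₀+1)
    obtain ⟨u, hu, hu2⟩ := Finset.mem_image.mp htS
    obtain ⟨c, hc, rfl⟩ := List.mem_map.mp (List.mem_toFinset.mp hu)
    have hcS : c % d ∈ S := hmodS c (by
      rw [show r₀ + 1 = j₀ + (r₀ + 1 - j₀) by omega, ← List.drop_drop] at hc
      exact List.mem_of_mem_drop hc)
    have htSfull : t % d ∈ S := by rw [← hu2]; exact hNE.nextPt_mod c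
    -- t ≤ B
    have htB : t ≤ B := by
      by_contra h
      push_neg at h
      have : QB ≤ t := nextPt_le h htSfull
      omega
    -- predecessor of t
    obtain ⟨p, hpt, hpS, hpnext⟩ := hNE.exists_pred htSfull ht hQAS
    have hQAp : QA ≤ p := by
      by_contra h
      push_neg at h
      have := nextPt_le h hQAS
      rw [hpnext] at this
      omega
    have hpc : p % d = c % d := by
      refine hNE.nextPt_mod_inj hd hpS hcS ?_
      rw [hpnext, hu2]
    have hpSr : p % d ∈ Sr := by
      rw [hpc, hSr]
      exact Finset.mem_image_of_mem _ (List.mem_toFinset.mpr hc)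
    have hAp : A < p := lt_of_lt_of_le (hNE.lt_nextPt A) hQAp
    have : B ≤ p := by
      rw [hx]
      exact nextPt_le hAp hpSr
    omega
  -- conclude by antisymmetry
  have h1 : nextPt d S'' QA ≤ QB := nextPt_le hQAB hQBS''
  have h2 : QB ≤ nextPt d S'' QA := by
    have hne : {q : ℕ | QA < q ∧ q % d ∈ S''}.Nonempty := ⟨QB, hQAB, hQBS''⟩
    have hmem := Nat.sInf_mem hne
    exact hmin _ hmem.1 hmem.2
  omega
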